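/- Let Γ₁ and Γ₂ be balanced digraphs of orders n₁ ≥ 1 and n₂ ≥ 1 with Laplacians L₁ and L₂, and let L = fromBlocks (L₁ + n₂·I) (−J) 0 L₂, where J is the n₁×n₂ all-ones matrix; L is the Laplacian of the directed join Γ₁ →∨ Γ₂ of order n = n₁ + n₂. Then W_r(L) = convexHull ℝ ( { z + n₂ : z ∈ W_r(L₁) } ∪ W_r(L₂) ∪ {n₂} ), where ℂ is regarded as a real vector space. -/

import Mathlib

open Matrix
open scoped InnerProductSpace ComplexConjugate

/-- A 0/1 adjacency matrix with zero diagonal. -/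
def IsAdj {m : Type*} [Fintype m] (A : Matrix m m ℝ) : Prop :=
  (∀ i j, A i j = 0 ∨ A i j = 1) ∧ ∀ i, A i i = 0

/-- Laplacian of a digraph: `L i i = d⁺(i)` and `L i j = -A i j` for `i ≠ j`. -/
noncomputable def lap {m : Type*} [Fintype m] [DecidableEq m] (A : Matrix m m ℝ) :
    Matrix m m ℝ :=
  Matrix.diagonal (fun i => ∑ j, A i j) - A

/-- Complexified Laplacian. -/
noncomputable def lapC {m : Type*} [Fintype m] [DecidableEq m] (A : Matrix m m ℝ) :
    Matrix m m ℂ :=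
  (lap A).map (fun x => (x : ℂ))

/-- Restricted numerical range `W_r(M) = { xᴴ M x : ‖x‖ = 1, xᴴ e = 0 }`. -/
noncomputable def rnr {m : Type*} [Fintype m] (M : Matrix m m ℂ) : Set ℂ :=
  { z | ∃ x : EuclideanSpace ℂ m, ‖x‖ = 1 ∧ star (x : m → ℂ) ⬝ᵥ (fun _ => (1 : ℂ)) = 0 ∧
      z = star (x : m → ℂ) ⬝ᵥ M.mulVec (x : m → ℂ) }

/-- Restrictor matrix: orthonormal columns, all orthogonal to the all-ones vector. -/
def IsRestrictor {m k : Type*} [Fintype m] [Fintype k] [DecidableEq k]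
    (Q : Matrix m k ℂ) : Prop :=
  Qᴴ * Q = 1 ∧ Qᴴ *ᵥ (fun _ => (1 : ℂ)) = 0

/-- Normal matrix: `Mᴴ M = M Mᴴ` (for real matrices, `Mᵀ M = M Mᵀ`). -/
def IsNormalM {m R : Type*} [Fintype m] [Mul (Matrix m m R)] [Star (Matrix m m R)]
    (M : Matrix m m R) : Prop := star M * M = M * star M

/-- Balanced digraph: `d⁺(i) = d⁻(i)` for every vertex. -/
def Bal {m : Type*} [Fintype m] (A : Matrix m m ℝ) : Prop :=
  ∀ i, ∑ j, A i j = ∑ j, A j i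

section Aux
variable {m : Type*} [Fintype m]

lemma star_dot_self_eq (f : m → ℂ) :
    star f ⬝ᵥ f = ((∑ i, Complex.normSq (f i) : ℝ) : ℂ) := by
  simp only [dotProduct, Pi.star_apply, Complex.ofReal_sum]
  exact Finset.sum_congr rfl fun i _ => Complex.normSq_eq_conj_mul_self.symm

lemma rnr_iff (M : Matrix m m ℂ) (z : ℂ) :
    z ∈ rnr M ↔ ∃ f : m → ℂ, star f ⬝ᵥ f = 1 ∧ star f ⬝ᵥ (fun _ => (1:ℂ)) = 0 ∧
      z = star f ⬝ᵥ M *ᵥ f := by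
  constructor
  · rintro ⟨x, hx, h0, hz⟩
    refine ⟨(x : m → ℂ), ?_, h0, hz⟩
    have : (⟪x, x⟫_ℂ) = ((‖x‖ : ℂ))^2 := inner_self_eq_norm_sq_to_K x
    rw [EuclideanSpace.inner_eq_star_dotProduct, dotProduct_comm] at this
    simpa [hx] using this
  · rintro ⟨f, hf, h0, hz⟩
    refine ⟨(WithLp.equiv 2 _).symm f, ?_, h0, hz⟩
    have : (⟪(WithLp.equiv 2 (m → ℂ)).symm f, (WithLp.equiv 2 (m → ℂ)).symm f⟫_ℂ)
        = ((‖(WithLp.equiv 2 (m → ℂ)).symm f‖ : ℂ))^2 := inner_self_eq_norm_sq_to_K _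
    rw [WithLp.equiv_symm_apply, EuclideanSpace.inner_toLp_toLp, dotProduct_comm, hf] at this
    have hn : (‖(WithLp.equiv 2 (m → ℂ)).symm f‖ : ℂ)^2 = 1 := this.symm
    have := Complex.ofReal_injective
      (by exact_mod_cast hn : ((‖(WithLp.equiv 2 (m → ℂ)).symm f‖^2 : ℝ) : ℂ) = ((1:ℝ):ℂ))
    nlinarith [norm_nonneg ((WithLp.equiv 2 (m → ℂ)).symm f)]

lemma quad_expand (M : Matrix m m ℂ) (a b : ℂ) (p r : m → ℂ) :
    star (a • p + b • r) ⬝ᵥ M *ᵥ (a • p + b • r)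
      = conj a * a * (star p ⬝ᵥ M *ᵥ p) + conj a * b * (star p ⬝ᵥ M *ᵥ r)
        + conj b * a * (star r ⬝ᵥ M *ᵥ p) + conj b * b * (star r ⬝ᵥ M *ᵥ r) := by
  simp only [star_add, star_smul, mulVec_add, Matrix.mulVec_smul, add_dotProduct,
    smul_dotProduct, dotProduct_add, dotProduct_smul, smul_eq_mul, Complex.star_def]
  ring

lemma dot_expand (a b : ℂ) (p r : m → ℂ) :
    star (a • p + b • r) ⬝ᵥ (a • p + b • r)
      = conj a * a * (star p ⬝ᵥ p) + conj a * b * (star p ⬝ᵥ r)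
        + conj b * a * (star r ⬝ᵥ p) + conj b * b * (star r ⬝ᵥ r) := by
  simp only [star_add, star_smul, add_dotProduct, smul_dotProduct, dotProduct_add,
    dotProduct_smul, smul_eq_mul, Complex.star_def]
  ring

lemma lin_expand (a b : ℂ) (p r w : m → ℂ) :
    star (a • p + b • r) ⬝ᵥ w = conj a * (star p ⬝ᵥ w) + conj b * (star r ⬝ᵥ w) := by
  simp only [star_add, star_smul, add_dotProduct, smul_dotProduct, smul_eq_mul,
    Complex.star_def]

/-- Scaling a vector of squared length `t` to a unit vector. -/
lemma rnr_mem_of_scale (M : Matrix m m ℂ) (u : m → ℂ) (t : ℝ) (ht : 0 < t)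
    (huu : star u ⬝ᵥ u = (t : ℂ)) (hu0 : star u ⬝ᵥ (fun _ => (1:ℂ)) = 0) :
    ((t⁻¹ : ℝ) : ℂ) * (star u ⬝ᵥ M *ᵥ u) ∈ rnr M := by
  rw [rnr_iff]
  refine ⟨(((Real.sqrt t)⁻¹ : ℝ) : ℂ) • u, ?_, ?_, ?_⟩
  · have h1 : star ((((Real.sqrt t)⁻¹ : ℝ) : ℂ) • u) = (((Real.sqrt t)⁻¹ : ℝ) : ℂ) • star u := by
      simp [star_smul, Complex.star_def, Complex.conj_ofReal]
    rw [h1, smul_dotProduct, dotProduct_smul, huu, smul_eq_mul, smul_eq_mul]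
    rw [← Complex.ofReal_mul, ← Complex.ofReal_mul]
    norm_cast
    have hs : Real.sqrt t⁻¹ * Real.sqrt t⁻¹ = t⁻¹ := Real.mul_self_sqrt (by positivity)
    rw [Real.sqrt_inv] at hs
    rw [← mul_assoc, hs, inv_mul_cancel₀ ht.ne']
  · have h1 : star ((((Real.sqrt t)⁻¹ : ℝ) : ℂ) • u) = (((Real.sqrt t)⁻¹ : ℝ) : ℂ) • star u := by
      simp [star_smul, Complex.star_def, Complex.conj_ofReal]
    rw [h1, smul_dotProduct, hu0, smul_zero]
  · have h1 : star ((((Real.sqrt t)⁻¹ : ℝ) : ℂ) • u) = (((Real.sqrt t)⁻¹ : ℝ) : ℂ) • star u := by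
      simp [star_smul, Complex.star_def, Complex.conj_ofReal]
    rw [h1, Matrix.mulVec_smul, smul_dotProduct, dotProduct_smul, smul_eq_mul, smul_eq_mul,
      ← mul_assoc, ← Complex.ofReal_mul]
    congr 2
    have hs : Real.sqrt t⁻¹ * Real.sqrt t⁻¹ = t⁻¹ := Real.mul_self_sqrt (by positivity)
    rw [Real.sqrt_inv] at hs
    exact hs.symm

lemma smul_quad (M : Matrix m m ℂ) (a : ℂ) (p : m → ℂ) :
    star (a • p) ⬝ᵥ M *ᵥ (a • p) = conj a * a * (star p ⬝ᵥ M *ᵥ p) := by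
  simp only [star_smul, smul_dotProduct, Matrix.mulVec_smul, dotProduct_smul,
    smul_eq_mul, Complex.star_def]
  ring

lemma smul_dot (a : ℂ) (p w : m → ℂ) :
    star (a • p) ⬝ᵥ w = conj a * (star p ⬝ᵥ w) := by
  simp only [star_smul, smul_dotProduct, smul_eq_mul, Complex.star_def]

/-- Key segment lemma. -/
lemma rnr_segment (M : Matrix m m ℂ) (f g : m → ℂ)
    (hff : star f ⬝ᵥ f = 1) (hgg : star g ⬝ᵥ g = 1)
    (hf0 : star f ⬝ᵥ (fun _ => (1:ℂ)) = 0) (hg0 : star g ⬝ᵥ (fun _ => (1:ℂ)) = 0)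
    (hqf : star f ⬝ᵥ M *ᵥ f = 0) (hqg : star g ⬝ᵥ M *ᵥ g = 1)
    (t : ℝ) (ht : t ∈ Set.Icc (0:ℝ) 1) : ((t:ℂ)) ∈ rnr M := by
  classical
  set s : ℂ := star f ⬝ᵥ M *ᵥ g with hs
  set r : ℂ := star g ⬝ᵥ M *ᵥ f with hr
  set d : ℂ := s - conj r with hd
  set c : ℂ := if d = 0 then 1 else d / ‖d‖ with hc
  have hcd : conj c * d = ((‖d‖ : ℝ) : ℂ) := by
    by_cases h : d = 0
    · simp [hc, h]
    · have habs : ((‖d‖ : ℝ) : ℂ) ≠ 0 := by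
        exact_mod_cast (norm_ne_zero_iff.mpr h)
      rw [hc, if_neg h, map_div₀, Complex.conj_ofReal, div_mul_eq_mul_div,
        ← Complex.normSq_eq_conj_mul_self, div_eq_iff habs]
      norm_cast
      rw [← Complex.sq_norm]; ring
  have hcc : conj c * c = 1 := by
    by_cases h : d = 0
    · simp [hc, h]
    · have habs : ((‖d‖ : ℝ) : ℂ) ≠ 0 := by
        exact_mod_cast (norm_ne_zero_iff.mpr h)
      rw [hc, if_neg h, map_div₀, Complex.conj_ofReal]
      rw [div_mul_div_comm, ← Complex.normSq_eq_conj_mul_self]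
      rw [div_eq_one_iff_eq (by simpa using mul_ne_zero habs habs)]
      norm_cast
      rw [← Complex.sq_norm]; ring
  have hreal : c * conj d = conj c * d := by
    have h1 := congrArg (starRingEnd ℂ) hcd
    simp only [_root_.map_mul, Complex.conj_conj, Complex.conj_ofReal] at h1
    exact h1.trans hcd.symm
  set f' : m → ℂ := c • f with hf'
  have hqf' : star f' ⬝ᵥ M *ᵥ f' = 0 := by rw [hf', smul_quad, hqf, mul_zero]
  have hf'f' : star f' ⬝ᵥ f' = 1 := by
    rw [hf', smul_dot, dotProduct_smul, hff, smul_eq_mul, mul_one, hcc]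
  have hf'0 : star f' ⬝ᵥ (fun _ => (1:ℂ)) = 0 := by
    rw [hf', smul_dot, hf0, mul_zero]
  have hs' : star f' ⬝ᵥ M *ᵥ g = conj c * s := by rw [hf', smul_dot]
  have hr' : star g ⬝ᵥ M *ᵥ f' = c * r := by
    rw [hf', Matrix.mulVec_smul, dotProduct_smul, smul_eq_mul]
  set σ : ℂ := conj c * s + c * r with hσ
  have hσreal : conj σ = σ := by
    have h1 : c * (conj s - r) = conj c * (s - conj r) := by
      simpa only [hd, map_sub, Complex.conj_conj] using hreal
    simp only [hσ, map_add, _root_.map_mul, Complex.conj_conj]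
    linear_combination h1
  obtain ⟨σr, hσr⟩ := Complex.conj_eq_iff_real.mp hσreal
  set w : ℂ := star f' ⬝ᵥ g with hw
  have hwg : star g ⬝ᵥ f' = conj w := by
    rw [hw, Matrix.star_dotProduct]; rfl
  set ρ : ℂ := w + conj w with hρ
  have hρreal : conj ρ = ρ := by simp only [hρ, map_add, Complex.conj_conj]; ring
  obtain ⟨ρr, hρr⟩ := Complex.conj_eq_iff_real.mp hρreal
  set hv : ℝ → (m → ℂ) := fun u => (((1-u : ℝ)) : ℂ) • f' + ((u : ℝ) : ℂ) • g with hhv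
  set Nr : ℝ → ℝ := fun u => (1-u)^2 + u*(1-u)*ρr + u^2 with hNrdef
  set Qr : ℝ → ℝ := fun u => u*(1-u)*σr + u^2 with hQrdef
  have hconj : ∀ x : ℝ, conj ((x : ℂ)) = (x : ℂ) := fun x => Complex.conj_ofReal x
  have hNr : ∀ u : ℝ, star (hv u) ⬝ᵥ hv u = ((Nr u : ℝ) : ℂ) := by
    intro u
    rw [hhv, dot_expand, hf'f', hwg]
    simp only [hconj]
    rw [show star f' ⬝ᵥ g = w from rfl, hgg]
    have : ((1-u:ℝ):ℂ) * ((1-u:ℝ):ℂ) * 1 + ((1-u:ℝ):ℂ) * (u:ℂ) * w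
        + (u:ℂ) * ((1-u:ℝ):ℂ) * conj w + (u:ℂ) * (u:ℂ) * 1
        = ((1-u:ℝ):ℂ)^2 + (u:ℂ) * ((1-u:ℝ):ℂ) * ρ + (u:ℂ)^2 := by rw [hρ]; ring
    rw [this, hρr]
    push_cast [hNrdef]
    ring
  have hQr : ∀ u : ℝ, star (hv u) ⬝ᵥ M *ᵥ hv u = ((Qr u : ℝ) : ℂ) := by
    intro u
    rw [hhv, quad_expand, hqf', hs', hr', hqg]
    simp only [hconj]
    have : ((1-u:ℝ):ℂ) * ((1-u:ℝ):ℂ) * 0 + ((1-u:ℝ):ℂ) * (u:ℂ) * (conj c * s)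
        + (u:ℂ) * ((1-u:ℝ):ℂ) * (c * r) + (u:ℂ) * (u:ℂ) * 1
        = (u:ℂ) * ((1-u:ℝ):ℂ) * σ + (u:ℂ)^2 := by rw [hσ]; ring
    rw [this, hσr]
    push_cast [hQrdef]
    ring
  have hv0 : ∀ u : ℝ, star (hv u) ⬝ᵥ (fun _ => (1:ℂ)) = 0 := by
    intro u
    rw [hhv, lin_expand, hf'0, hg0, mul_zero, mul_zero, add_zero]
  have hNpos : ∀ u : ℝ, 0 < Nr u := by
    intro u
    have hsum : Nr u = ∑ i, Complex.normSq (hv u i) := by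
      have := (hNr u).symm.trans (star_dot_self_eq (hv u))
      exact_mod_cast this
    have hnn : 0 ≤ Nr u := by
      rw [hsum]; exact Finset.sum_nonneg fun i _ => Complex.normSq_nonneg _
    rcases hnn.lt_or_eq with h | h
    · exact h
    exfalso
    have hzero : ∀ i, hv u i = 0 := by
      intro i
      have h0 : ∑ i, Complex.normSq (hv u i) = 0 := by rw [← hsum, ← h]
      have := (Finset.sum_eq_zero_iff_of_nonneg
        (fun i _ => Complex.normSq_nonneg (hv u i))).mp h0 i (Finset.mem_univ i)
      exact Complex.normSq_eq_zero.mp this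
    by_cases hu : u = 0
    · have hfz : f' = 0 := by
        funext i
        have := hzero i
        simp only [hhv, hu, Pi.add_apply, Pi.smul_apply, smul_eq_mul] at this
        push_cast at this
        simpa using this
      rw [hfz] at hf'f'
      simp at hf'f'
    · have hgf : g = ((-((1-u)/u) : ℝ) : ℂ) • f' := by
        funext i
        have := hzero i
        simp only [hhv, Pi.add_apply, Pi.smul_apply, smul_eq_mul] at this
        have huC : ((u:ℝ):ℂ) ≠ 0 := by exact_mod_cast hu
        rw [Pi.smul_apply, smul_eq_mul]
        push_cast at this ⊢
        field_simp
        linear_combination this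
      have : (1 : ℂ) = 0 := by
        rw [← hqg, hgf, smul_quad, hqf', mul_zero]
      simp at this
  set ψ : ℝ → ℝ := fun u => Qr u / Nr u with hψdef
  have hQc : Continuous Qr := by
    rw [hQrdef]
    exact ((continuous_id'.mul (continuous_const.sub continuous_id')).mul
      continuous_const).add (continuous_pow 2)
  have hNc : Continuous Nr := by
    rw [hNrdef]
    exact (((continuous_const.sub continuous_id').pow 2).add
      ((continuous_id'.mul (continuous_const.sub continuous_id')).mul
        continuous_const)).add (continuous_pow 2)
  have hψcont : Continuous ψ := hQc.div hNc fun u => (hNpos u).ne'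
  have hψ0 : ψ 0 = 0 := by simp [hψdef, hQrdef, hNrdef]
  have hψ1 : ψ 1 = 1 := by simp [hψdef, hQrdef, hNrdef]
  have hiv := intermediate_value_Icc (zero_le_one (α := ℝ)) hψcont.continuousOn
  rw [hψ0, hψ1] at hiv
  obtain ⟨u, _, hψu⟩ := hiv ht
  have hmem := rnr_mem_of_scale M (hv u) (Nr u) (hNpos u) (hNr u) (hv0 u)
  rw [hQr u, ← Complex.ofReal_mul] at hmem
  have : (Nr u)⁻¹ * Qr u = t := by rw [← hψu]; simp only [hψdef]; rw [div_eq_inv_mul]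
  rwa [this] at hmem

theorem rnr_convex [DecidableEq m] (M : Matrix m m ℂ) : Convex ℝ (rnr M) := by
  intro z₁ hz₁ z₂ hz₂ a b ha hb hab
  by_cases hzz : z₁ = z₂
  · subst hzz
    have : a • z₁ + b • z₁ = z₁ := by
      rw [← add_smul, hab, one_smul]
    rwa [this]
  obtain ⟨f, hff, hf0, hqf⟩ := (rnr_iff M z₁).mp hz₁
  obtain ⟨g, hgg, hg0, hqg⟩ := (rnr_iff M z₂).mp hz₂
  set c : ℂ := (z₂ - z₁)⁻¹ with hc
  have hc0 : c ≠ 0 := inv_ne_zero (sub_ne_zero.mpr (Ne.symm hzz))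
  set dd : ℂ := -(c * z₁) with hdd
  set M' : Matrix m m ℂ := c • M + dd • (1 : Matrix m m ℂ) with hM'
  have hq' : ∀ w : m → ℂ, star w ⬝ᵥ M' *ᵥ w
      = c * (star w ⬝ᵥ M *ᵥ w) + dd * (star w ⬝ᵥ w) := by
    intro w
    rw [hM', add_mulVec, smul_mulVec, smul_mulVec, one_mulVec,
      dotProduct_add, dotProduct_smul, dotProduct_smul, smul_eq_mul, smul_eq_mul]
  have hqf' : star f ⬝ᵥ M' *ᵥ f = 0 := by
    rw [hq', ← hqf, hff, hdd]; ring
  have hsub : (z₂ - z₁) ≠ 0 := sub_ne_zero.mpr (Ne.symm hzz)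
  have hqg' : star g ⬝ᵥ M' *ᵥ g = 1 := by
    rw [hq', ← hqg, hgg, hdd, hc, mul_one]
    field_simp
    ring
  have hbmem : ((b : ℂ)) ∈ rnr M' :=
    rnr_segment M' f g hff hgg hf0 hg0 hqf' hqg' b ⟨hb, by linarith⟩
  obtain ⟨k, hkk, hk0, hkq⟩ := (rnr_iff M' ((b:ℂ))).mp hbmem
  rw [hq' k, hkk, mul_one] at hkq
  rw [rnr_iff]
  refine ⟨k, hkk, hk0, ?_⟩
  have habC : (a : ℂ) + (b : ℂ) = 1 := by exact_mod_cast congrArg (Complex.ofReal) hab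
  have hstep : c * (a • z₁ + b • z₂) + dd = (b : ℂ) := by
    rw [Complex.real_smul, Complex.real_smul, hdd, hc]
    have h1 : (a:ℂ) = 1 - (b:ℂ) := by linear_combination habC
    rw [h1]
    field_simp
    ring
  exact mul_left_cancel₀ hc0 (add_right_cancel (hstep.trans hkq))

end Aux

section Lap
variable {k : Type*} [Fintype k] [DecidableEq k]

lemma lapC_row (A : Matrix k k ℝ) : lapC A *ᵥ (fun _ => (1:ℂ)) = 0 := by
  funext i
  have h : ∑ j, lap A i j = 0 := by
    simp [lap, Matrix.sub_apply, Finset.sum_sub_distrib, Matrix.diagonal_apply]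
  have h2 : (lapC A *ᵥ fun _ => (1:ℂ)) i = ((∑ j, lap A i j : ℝ) : ℂ) := by
    simp [lapC, mulVec, dotProduct, Matrix.map_apply]
  rw [h2, h]
  simp

lemma lapC_col (A : Matrix k k ℝ) (hb : Bal A) (j : k) : ∑ i, lapC A i j = 0 := by
  have h : ∑ i, lap A i j = 0 := by
    have h3 : ∑ i, lap A i j = (∑ i, A j i) - ∑ i, A i j := by
      simp [lap, Matrix.sub_apply, Finset.sum_sub_distrib, Matrix.diagonal_apply]
    rw [h3, ← hb j, sub_self]
  have h2 : ∑ i, lapC A i j = ((∑ i, lap A i j : ℝ) : ℂ) := by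
    simp [lapC, Matrix.map_apply]
  rw [h2, h]
  simp

omit [DecidableEq k] in
lemma dot_e_mulVec (L : Matrix k k ℂ) (hcol : ∀ j, ∑ i, L i j = 0) (w : k → ℂ) :
    (fun _ => (1:ℂ)) ⬝ᵥ (L *ᵥ w) = 0 := by
  rw [dotProduct_mulVec]
  have h : (fun _ => (1:ℂ)) ᵥ* L = 0 := by
    funext j
    simp [vecMul, dotProduct, hcol j]
  rw [h, zero_dotProduct]

omit [Fintype k] [DecidableEq k] in
lemma star_one_vec : star (fun _ : k => (1:ℂ)) = fun _ => (1:ℂ) := by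
  funext i; simp

omit [DecidableEq k] in
lemma quad_shift (L : Matrix k k ℂ) (hrow : L *ᵥ (fun _ => (1:ℂ)) = 0)
    (hcol : ∀ j, ∑ i, L i j = 0) (u : k → ℂ) (α : ℂ) :
    star (u + α • (fun _ => (1:ℂ))) ⬝ᵥ L *ᵥ (u + α • (fun _ => (1:ℂ)))
      = star u ⬝ᵥ L *ᵥ u := by
  rw [mulVec_add, Matrix.mulVec_smul, hrow, smul_zero, add_zero, star_add,
    add_dotProduct, star_smul, smul_dotProduct, star_one_vec,
    dot_e_mulVec L hcol u, smul_zero, add_zero]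

end Lap

lemma star_elim {k l : Type*} (p : k → ℂ) (q : l → ℂ) :
    star (Sum.elim p q) = Sum.elim (star p) (star q) := by
  funext i; cases i <;> rfl

lemma one_elim {k l : Type*} :
    (fun _ : k ⊕ l => (1:ℂ)) = Sum.elim (fun _ => (1:ℂ)) (fun _ => (1:ℂ)) := by
  funext i; cases i <;> rfl

lemma const_dot_const {n : ℕ} (a b : ℂ) :
    (fun _ : Fin n => a) ⬝ᵥ (fun _ : Fin n => b) = (n : ℂ) * (a * b) := by
  simp [dotProduct, Finset.sum_const, Finset.card_univ, nsmul_eq_mul]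

lemma star_const {n : ℕ} (a : ℝ) :
    star (fun _ : Fin n => ((a : ℝ) : ℂ)) = (fun _ : Fin n => ((a : ℝ) : ℂ)) := by
  funext i; simp [Complex.star_def, Complex.conj_ofReal]

lemma const_eq_smul_one {k : Type*} (a : ℂ) :
    (fun _ : k => a) = a • (fun _ : k => (1:ℂ)) := by
  funext i; simp

lemma star_dot_one {n : ℕ} (u : Fin n → ℂ) :
    star u ⬝ᵥ (fun _ => (1:ℂ)) = conj (∑ i, u i) := by
  simp only [dotProduct, Pi.star_apply, mul_one, Complex.star_def]
  rw [← map_sum]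

lemma shift_dot {n : ℕ} (u : Fin n → ℂ) (α : ℂ) (hsu : ∑ i, u i = 0) :
    star (u + α • (fun _ => (1:ℂ))) ⬝ᵥ (u + α • (fun _ => (1:ℂ)))
      = star u ⬝ᵥ u + (n : ℂ) * (conj α * α) := by
  have h1 : star u ⬝ᵥ (fun _ : Fin n => (1:ℂ)) = 0 := by
    rw [star_dot_one, hsu, map_zero]
  have h2 : (fun _ : Fin n => (1:ℂ)) ⬝ᵥ u = 0 := by
    simp only [dotProduct, one_mul]; exact hsu
  have h3 : (fun _ : Fin n => (1:ℂ)) ⬝ᵥ (fun _ : Fin n => (1:ℂ)) = (n:ℂ) := by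
    rw [const_dot_const]; ring
  rw [star_add, star_smul, star_one_vec, add_dotProduct, smul_dotProduct,
    dotProduct_add, dotProduct_add, dotProduct_smul, dotProduct_smul, h1, h2, h3,
    Complex.star_def]
  simp only [smul_eq_mul, smul_zero, mul_zero, add_zero, zero_add]
  ring

lemma mulVec_B_const {n₁ n₂ : ℕ} (w : Fin n₂ → ℂ) :
    (Matrix.of fun _ _ => (1:ℂ)) *ᵥ w = fun _ : Fin n₁ => ∑ j, w j := by
  funext i
  simp [mulVec, dotProduct]


set_option maxHeartbeats 1600000 in
/-- For balanced digraphs `Γ₁, Γ₂`, the restricted numerical range of the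
directed join satisfies
`W_r(Γ₁ →∨ Γ₂) = conv((W_r(Γ₁) + n₂) ∪ W_r(Γ₂) ∪ {n₂})`. -/
theorem rnr_directed_join {n₁ n₂ : ℕ} (h₁ : 1 ≤ n₁) (h₂ : 1 ≤ n₂)
    (A₁ : Matrix (Fin n₁) (Fin n₁) ℝ) (A₂ : Matrix (Fin n₂) (Fin n₂) ℝ)
    (hA₁ : IsAdj A₁) (hA₂ : IsAdj A₂) (hb₁ : Bal A₁) (hb₂ : Bal A₂) :
    rnr (Matrix.fromBlocks
        (lapC A₁ + (n₂ : ℂ) • (1 : Matrix (Fin n₁) (Fin n₁) ℂ))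
        (-(Matrix.of fun _ _ => (1 : ℂ))) 0 (lapC A₂)) =
      convexHull ℝ (((fun z => z + (n₂ : ℂ)) '' rnr (lapC A₁)) ∪ rnr (lapC A₂)
        ∪ {(n₂ : ℂ)}) := by
  have hn₁ : (0:ℝ) < n₁ := by exact_mod_cast h₁
  have hn₂ : (0:ℝ) < n₂ := by exact_mod_cast h₂
  have hn₁C : ((n₁:ℕ) : ℂ) ≠ 0 := by exact_mod_cast (Nat.one_le_iff_ne_zero.mp h₁)
  have hn₂C : ((n₂:ℕ) : ℂ) ≠ 0 := by exact_mod_cast (Nat.one_le_iff_ne_zero.mp h₂)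
  set B : Matrix (Fin n₁) (Fin n₂) ℂ := Matrix.of fun _ _ => (1:ℂ) with hB
  set L : Matrix (Fin n₁ ⊕ Fin n₂) (Fin n₁ ⊕ Fin n₂) ℂ :=
    Matrix.fromBlocks (lapC A₁ + (n₂ : ℂ) • 1) (-B) 0 (lapC A₂) with hL
  set S : Set ℂ := ((fun z => z + (n₂ : ℂ)) '' rnr (lapC A₁)) ∪ rnr (lapC A₂)
      ∪ {(n₂ : ℂ)} with hS
  apply Set.Subset.antisymm
  · -- hard direction
    intro z hz
    obtain ⟨x, hxx, hx0, hq⟩ := (rnr_iff L z).mp hz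
    set x₁ : Fin n₁ → ℂ := x ∘ Sum.inl with hx₁def
    set x₂ : Fin n₂ → ℂ := x ∘ Sum.inr with hx₂def
    have hxe : (x : Fin n₁ ⊕ Fin n₂ → ℂ) = Sum.elim x₁ x₂ := by
      funext i; cases i <;> rfl
    set S₁ : ℂ := ∑ i, x₁ i with hS₁
    set S₂ : ℂ := ∑ i, x₂ i with hS₂
    have hsum : S₁ + S₂ = 0 := by
      have h := hx0
      rw [hxe, star_elim, one_elim, sumElim_dotProduct_sumElim,
        star_dot_one, star_dot_one, ← map_add] at h
      have := congrArg (starRingEnd ℂ) h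
      rwa [Complex.conj_conj, map_zero] at this
    have hS₂S₁ : S₂ = -S₁ := by linear_combination hsum
    set α : ℂ := S₁ / n₁ with hα
    set β : ℂ := S₂ / n₂ with hβ
    set u : Fin n₁ → ℂ := x₁ - α • (fun _ => (1:ℂ)) with hu
    set v : Fin n₂ → ℂ := x₂ - β • (fun _ => (1:ℂ)) with hv
    have hx₁ : x₁ = u + α • (fun _ => (1:ℂ)) := by rw [hu, sub_add_cancel]
    have hx₂ : x₂ = v + β • (fun _ => (1:ℂ)) := by rw [hv, sub_add_cancel]
    have hsu : ∑ i, u i = 0 := by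
      rw [hu]
      simp only [Pi.sub_apply, Pi.smul_apply, smul_eq_mul, mul_one,
        Finset.sum_sub_distrib, Finset.sum_const, Finset.card_univ, Fintype.card_fin,
        nsmul_eq_mul]
      rw [← hS₁, hα]
      field_simp
      ring
    have hsv : ∑ i, v i = 0 := by
      rw [hv]
      simp only [Pi.sub_apply, Pi.smul_apply, smul_eq_mul, mul_one,
        Finset.sum_sub_distrib, Finset.sum_const, Finset.card_univ, Fintype.card_fin,
        nsmul_eq_mul]
      rw [← hS₂, hβ]
      field_simp
      ring
    have hu0 : star u ⬝ᵥ (fun _ => (1:ℂ)) = 0 := by rw [star_dot_one, hsu, map_zero]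
    have hv0 : star v ⬝ᵥ (fun _ => (1:ℂ)) = 0 := by rw [star_dot_one, hsv, map_zero]
    -- the quadratic form identities
    have T1 : star x₁ ⬝ᵥ lapC A₁ *ᵥ x₁ = star u ⬝ᵥ lapC A₁ *ᵥ u := by
      rw [hx₁]; exact quad_shift _ (lapC_row A₁) (lapC_col A₁ hb₁) u α
    have T3 : star x₂ ⬝ᵥ lapC A₂ *ᵥ x₂ = star v ⬝ᵥ lapC A₂ *ᵥ v := by
      rw [hx₂]; exact quad_shift _ (lapC_row A₂) (lapC_col A₂ hb₂) v β
    have T2 : star x₁ ⬝ᵥ x₁ = star u ⬝ᵥ u + (n₁ : ℂ) * (conj α * α) := by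
      rw [hx₁]; exact shift_dot u α hsu
    have T4 : star x₂ ⬝ᵥ x₂ = star v ⬝ᵥ v + (n₂ : ℂ) * (conj β * β) := by
      rw [hx₂]; exact shift_dot v β hsv
    have T5 : star x₁ ⬝ᵥ (B *ᵥ x₂) = conj S₁ * S₂ := by
      rw [hB, mulVec_B_const, ← hS₂]
      simp only [dotProduct, Pi.star_apply, Complex.star_def]
      rw [← Finset.sum_mul, ← map_sum, ← hS₁]
    -- real quantities
    set t₁ : ℝ := ∑ i, Complex.normSq (u i) with ht₁
    set t₂ : ℝ := ∑ i, Complex.normSq (v i) with ht₂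
    set aα : ℝ := Complex.normSq α with haα
    set aβ : ℝ := Complex.normSq β with haβ
    set t₃ : ℝ := n₁ * aα + n₂ * aβ with ht₃
    have huu : star u ⬝ᵥ u = ((t₁ : ℝ) : ℂ) := star_dot_self_eq u
    have hvv : star v ⬝ᵥ v = ((t₂ : ℝ) : ℂ) := star_dot_self_eq v
    have hαα : conj α * α = ((aα : ℝ) : ℂ) := by
      rw [haα]; exact (Complex.normSq_eq_conj_mul_self).symm
    have hββ : conj β * β = ((aβ : ℝ) : ℂ) := by
      rw [haβ]; exact (Complex.normSq_eq_conj_mul_self).symm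
    have hS₁α : S₁ = (n₁ : ℂ) * α := by rw [hα, mul_comm, div_mul_cancel₀ _ hn₁C]
    have hS₂β : S₂ = (n₂ : ℂ) * β := by rw [hβ, mul_comm, div_mul_cancel₀ _ hn₂C]
    have hnS₁ : Complex.normSq S₁ = (n₁:ℝ)^2 * aα := by
      rw [hS₁α, Complex.normSq_mul, Complex.normSq_natCast]
      ring
    have hnSS : (n₂:ℝ)^2 * aβ = (n₁:ℝ)^2 * aα := by
      have e1 : Complex.normSq S₂ = (n₂:ℝ)^2 * aβ := by
        rw [hS₂β, Complex.normSq_mul, Complex.normSq_natCast]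
        ring
      have e2 : Complex.normSq S₂ = Complex.normSq S₁ := by
        rw [hS₂S₁, Complex.normSq_neg]
      rw [← e1, e2, hnS₁]
    have hT5' : star x₁ ⬝ᵥ (B *ᵥ x₂) = -(((n₁:ℝ)^2 * aα : ℝ) : ℂ) := by
      rw [T5, hS₂S₁, mul_neg, ← Complex.normSq_eq_conj_mul_self, hnS₁]
    -- norm identity
    have hnorm : t₁ + t₂ + t₃ = 1 := by
      have h := hxx
      rw [hxe, star_elim, sumElim_dotProduct_sumElim, T2, T4, huu, hvv,
        hαα, hββ] at h
      have h' : (((t₁ + n₁ * aα + (t₂ + n₂ * aβ) : ℝ)) : ℂ) = ((1:ℝ) : ℂ) := by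
        push_cast
        linear_combination h
      have := Complex.ofReal_injective h'
      rw [ht₃]; linarith
    -- the value of the quadratic form
    have hzeq : z = (star u ⬝ᵥ lapC A₁ *ᵥ u + ((n₂ * t₁ : ℝ) : ℂ))
        + star v ⬝ᵥ lapC A₂ *ᵥ v + ((n₂ * t₃ : ℝ) : ℂ) := by
      rw [hq, hxe, hL, Matrix.fromBlocks_mulVec, star_elim,
        sumElim_dotProduct_sumElim, Sum.elim_comp_inl, Sum.elim_comp_inr,
        zero_mulVec, zero_add, add_mulVec, smul_mulVec, one_mulVec,
        neg_mulVec, dotProduct_add, dotProduct_add, dotProduct_neg, dotProduct_smul,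
        T1, T2, hT5', T3, huu, hαα]
      rw [smul_eq_mul]
      have hC := congrArg Complex.ofReal hnSS
      have hC3 := congrArg Complex.ofReal ht₃
      push_cast at hC hC3 ⊢
      linear_combination -hC - (n₂:ℂ) * hC3
    -- positivity
    have ht₁0 : 0 ≤ t₁ := Finset.sum_nonneg fun i _ => Complex.normSq_nonneg _
    have ht₂0 : 0 ≤ t₂ := Finset.sum_nonneg fun i _ => Complex.normSq_nonneg _
    have ht₃0 : 0 ≤ t₃ := by
      rw [ht₃]
      have := Complex.normSq_nonneg α
      have := Complex.normSq_nonneg β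
      positivity
    -- build the three convex-combination points
    have hn₂S : ((n₂:ℕ) : ℂ) ∈ S := by rw [hS]; right; rfl
    have hP₁ : ∃ P ∈ S, (t₁ : ℝ) • P
        = star u ⬝ᵥ lapC A₁ *ᵥ u + ((n₂ * t₁ : ℝ) : ℂ) := by
      rcases ht₁0.lt_or_eq with h | h
      · refine ⟨((t₁⁻¹ : ℝ) : ℂ) * (star u ⬝ᵥ lapC A₁ *ᵥ u) + (n₂ : ℂ), ?_, ?_⟩
        · rw [hS]; left; left
          exact ⟨_, rnr_mem_of_scale (lapC A₁) u t₁ h (huu) hu0, rfl⟩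
        · rw [Complex.real_smul, mul_add, ← mul_assoc, ← Complex.ofReal_mul,
            mul_inv_cancel₀ h.ne']
          push_cast
          ring
      · have huz : u = 0 := by
          funext i
          have h0 : ∑ i, Complex.normSq (u i) = 0 := by rw [← ht₁, ← h]
          have := (Finset.sum_eq_zero_iff_of_nonneg
            (fun i _ => Complex.normSq_nonneg (u i))).mp h0 i (Finset.mem_univ i)
          exact Complex.normSq_eq_zero.mp this
        refine ⟨(n₂ : ℂ), hn₂S, ?_⟩
        rw [huz, ← h]
        simp
    have hP₂ : ∃ P ∈ S, (t₂ : ℝ) • P = star v ⬝ᵥ lapC A₂ *ᵥ v := by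
      rcases ht₂0.lt_or_eq with h | h
      · refine ⟨((t₂⁻¹ : ℝ) : ℂ) * (star v ⬝ᵥ lapC A₂ *ᵥ v), ?_, ?_⟩
        · rw [hS]; left; right
          exact rnr_mem_of_scale (lapC A₂) v t₂ h (hvv) hv0
        · rw [Complex.real_smul, ← mul_assoc, ← Complex.ofReal_mul,
            mul_inv_cancel₀ h.ne', Complex.ofReal_one, one_mul]
      · have hvz : v = 0 := by
          funext i
          have h0 : ∑ i, Complex.normSq (v i) = 0 := by rw [← ht₂, ← h]
          have := (Finset.sum_eq_zero_iff_of_nonneg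
            (fun i _ => Complex.normSq_nonneg (v i))).mp h0 i (Finset.mem_univ i)
          exact Complex.normSq_eq_zero.mp this
        refine ⟨(n₂ : ℂ), hn₂S, ?_⟩
        rw [hvz, ← h]
        simp
    obtain ⟨P₁, hP₁S, hP₁e⟩ := hP₁
    obtain ⟨P₂, hP₂S, hP₂e⟩ := hP₂
    have hfinal : z = (t₁ : ℝ) • P₁ + (t₂ : ℝ) • P₂ + (t₃ : ℝ) • ((n₂:ℕ) : ℂ) := by
      rw [hP₁e, hP₂e, hzeq, Complex.real_smul]
      push_cast
      ring
    rw [hfinal]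
    have hcvx := convex_convexHull ℝ S
    have m₁ := subset_convexHull ℝ S hP₁S
    have m₂ := subset_convexHull ℝ S hP₂S
    have m₃ := subset_convexHull ℝ S hn₂S
    have hsum12 : 0 ≤ t₁ + t₂ := by linarith
    rcases hsum12.lt_or_eq with hlt | heq0
    · have comb1 : (t₁ / (t₁ + t₂)) • P₁ + (t₂ / (t₁ + t₂)) • P₂ ∈ convexHull ℝ S :=
        hcvx m₁ m₂ (by positivity) (by positivity) (by field_simp)
      have comb2 := hcvx comb1 m₃ (by positivity : (0:ℝ) ≤ t₁ + t₂) ht₃0 hnorm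
      have : (t₁ + t₂) • ((t₁ / (t₁ + t₂)) • P₁ + (t₂ / (t₁ + t₂)) • P₂)
          + t₃ • ((n₂:ℕ) : ℂ) = t₁ • P₁ + t₂ • P₂ + t₃ • ((n₂:ℕ) : ℂ) := by
        rw [smul_add, smul_smul, smul_smul, mul_div_cancel₀ _ hlt.ne',
          mul_div_cancel₀ _ hlt.ne']
      rwa [this] at comb2
    · have h10 : t₁ = 0 := by linarith
      have h20 : t₂ = 0 := by linarith
      have h31 : t₃ = 1 := by linarith
      rw [h10, h20, h31]
      simpa using m₃
  · refine convexHull_min ?_ (rnr_convex L)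
    rintro z ((⟨z₁, hz₁, rfl⟩ | hz) | hz)
    · obtain ⟨f, hff, hf0, hqf⟩ := (rnr_iff _ z₁).mp hz₁
      rw [rnr_iff]
      refine ⟨Sum.elim f 0, ?_, ?_, ?_⟩
      · rw [star_elim, sumElim_dotProduct_sumElim, hff]
        simp
      · rw [star_elim, one_elim, sumElim_dotProduct_sumElim, hf0]
        simp
      · simp only [hL, Matrix.fromBlocks_mulVec, Sum.elim_comp_inl, Sum.elim_comp_inr,
          mulVec_zero, zero_mulVec, add_zero, zero_add, star_elim, star_zero,
          sumElim_dotProduct_sumElim, zero_dotProduct, dotProduct_zero,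
          add_mulVec, smul_mulVec, one_mulVec, dotProduct_add, dotProduct_smul,
          smul_eq_mul]
        rw [← hqf, hff, mul_one]
    · obtain ⟨g, hgg, hg0, hqg⟩ := (rnr_iff _ z).mp hz
      rw [rnr_iff]
      refine ⟨Sum.elim 0 g, ?_, ?_, ?_⟩
      · rw [star_elim, sumElim_dotProduct_sumElim, hgg]
        simp
      · rw [star_elim, one_elim, sumElim_dotProduct_sumElim, hg0]
        simp
      · rw [hL, Matrix.fromBlocks_mulVec, star_elim, sumElim_dotProduct_sumElim,
          Sum.elim_comp_inl, Sum.elim_comp_inr, star_zero, zero_dotProduct, zero_add,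
          zero_mulVec, zero_add, ← hqg]
    · rw [Set.mem_singleton_iff] at hz
      subst hz
      set r : ℝ := (n₁:ℝ) * n₂ * (n₁ + n₂) with hrdef
      have hr : 0 < r := by
        rw [hrdef]; apply mul_pos (mul_pos hn₁ hn₂); linarith
      set c : ℝ := (Real.sqrt r)⁻¹ with hcdef
      have hc2 : c * c = r⁻¹ := by
        rw [hcdef, ← mul_inv, Real.mul_self_sqrt hr.le]
      set a : ℂ := ((n₂ * c : ℝ) : ℂ) with hadef
      set b : ℂ := ((-(n₁ * c) : ℝ) : ℂ) with hbdef
      rw [rnr_iff]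
      refine ⟨Sum.elim (fun _ => a) (fun _ => b), ?_, ?_, ?_⟩
      · rw [star_elim, sumElim_dotProduct_sumElim, hadef, hbdef, star_const,
          star_const, const_dot_const, const_dot_const]
        have key : (n₁:ℝ) * ((n₂*c)*(n₂*c)) + (n₂:ℝ)*((-(n₁*c))*(-(n₁*c))) = 1 := by
          have e1 : (n₁:ℝ) * ((n₂*c)*(n₂*c)) + (n₂:ℝ)*((-(n₁*c))*(-(n₁*c)))
              = r * (c*c) := by rw [hrdef]; ring
          rw [e1, hc2, mul_inv_cancel₀ hr.ne']
        have := congrArg (Complex.ofReal) key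
        push_cast at this ⊢
        linear_combination this
      · rw [star_elim, one_elim, sumElim_dotProduct_sumElim, hadef, hbdef,
          star_const, star_const, const_dot_const, const_dot_const]
        push_cast
        ring
      · rw [hL, Matrix.fromBlocks_mulVec, star_elim, sumElim_dotProduct_sumElim,
          Sum.elim_comp_inl, Sum.elim_comp_inr]
        have h1 : lapC A₁ *ᵥ (fun _ => a) = 0 := by
          rw [const_eq_smul_one a, Matrix.mulVec_smul, lapC_row, smul_zero]
        have h2 : (0 : Matrix (Fin n₂) (Fin n₁) ℂ) *ᵥ (fun _ => a)
            + lapC A₂ *ᵥ (fun _ => b) = 0 := by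
          rw [zero_mulVec, zero_add, const_eq_smul_one b, Matrix.mulVec_smul,
            lapC_row, smul_zero]
        have h3 : (lapC A₁ + (n₂:ℂ) • 1) *ᵥ (fun _ => a) + (-B) *ᵥ (fun _ => b)
            = fun _ : Fin n₁ => (n₂:ℂ) * (a - b) := by
          rw [add_mulVec, smul_mulVec, one_mulVec, h1, zero_add, neg_mulVec,
            hB, mulVec_B_const]
          funext i
          simp only [Pi.add_apply, Pi.smul_apply, Pi.neg_apply, smul_eq_mul,
            Finset.sum_const, Finset.card_univ, Fintype.card_fin, nsmul_eq_mul]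
          ring
        rw [h2, h3, dotProduct_zero, add_zero, hadef, star_const, const_dot_const]
        have key : (n₁:ℝ) * ((n₂*c) * (n₂ * ((n₂*c) - (-(n₁*c))))) = n₂ := by
          have e1 : (n₁:ℝ) * ((n₂*c) * (n₂ * ((n₂*c) - (-(n₁*c)))))
              = (n₂:ℝ) * (r * (c*c)) := by rw [hrdef]; ring
          rw [e1, hc2, mul_inv_cancel₀ hr.ne', mul_one]
        have := congrArg (Complex.ofReal) key
        rw [hbdef]
        push_cast at this ⊢
        linear_combination this.symm
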